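/- Let (X,d,μ) be an η-Ahlfors regular quasi-metric measure space with η > 0 and triangular constant κ ≥ 1, and let ρ be the third order hypermetric induced by d. Then for every x ∈ X and every α > 0, the integral ∬_{{(y,z) ∈ X×X : ρ(x,y,z) < 1}} ρ(x,y,z)^{−α} dμ(y) dμ(z) is finite if and only if α < 2η. -/

import Mathlib

open MeasureTheory ENNReal

/-- The third order hypermetric induced by `d`:
`ρ(x,y,z) = inf_{u ∈ X} max {d(x,u), d(y,u), d(z,u)}`. -/
noncomputable def hyperRho {X : Type*} (d : X → X → ℝ) (x y z : X) : ℝ :=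
  ⨅ u : X, max (d x u) (max (d y u) (d z u))

/-- `d` is a quasi-metric on `X` with triangular constant `κ`. -/
def IsQuasiMetric {X : Type*} (d : X → X → ℝ) (κ : ℝ) : Prop :=
  (∀ x y, 0 ≤ d x y) ∧ (∀ x y, (d x y = 0 ↔ x = y)) ∧ (∀ x y, d x y = d y x) ∧
    (∀ x y z, d x z ≤ κ * (d x y + d y z))

/-- `(X,d,μ)` is `η`-Ahlfors regular with constants `a ≤ A`. -/
def IsAhlfors {X : Type*} [MeasurableSpace X] (d : X → X → ℝ) (μ : Measure X)
    (η a A : ℝ) : Prop :=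
  ∀ x : X, ∀ r : ℝ, 0 < r →
    ENNReal.ofReal (a * r ^ η) ≤ μ {y | d x y < r} ∧
      μ {y | d x y < r} ≤ ENNReal.ofReal (A * r ^ η)

open Filter Topology

section Aux

lemma aux_rpow_neg_le {s t : ℝ≥0∞} (h : s ≤ t) {β : ℝ} (hβ : 0 ≤ β) :
    t ^ (-β) ≤ s ^ (-β) := by
  rw [ENNReal.rpow_neg, ENNReal.rpow_neg]
  exact ENNReal.inv_le_inv.2 (ENNReal.rpow_le_rpow h hβ)

lemma genfin {Y : Type*} [MeasurableSpace Y] (ν : Measure Y) (g : Y → ℝ)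
    (hg : Measurable g) (hg0 : ∀ y, 0 ≤ g y)
    {C θ β R : ℝ} (hC : 0 < C) (hβ : 0 < β) (hβθ : β < θ) (hR : 0 < R)
    (hbound : ∀ t : ℝ, 0 < t → ν {y | g y < t} ≤ ENNReal.ofReal (C * t ^ θ)) :
    (∫⁻ y in {y | g y < R}, (ENNReal.ofReal (g y)) ^ (-β) ∂ν) < ⊤ := by
  have hθ : 0 < θ := hβ.trans hβθ
  have h2 : (0:ℝ) < 2⁻¹ := by norm_num
  -- the zero set is null
  have hnull : ν {y | g y = 0} = 0 := by
    have hle : ∀ n : ℕ, ν {y | g y = 0} ≤ ENNReal.ofReal (C * ((1:ℝ)/(n+1)) ^ θ) := by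
      intro n
      refine le_trans (measure_mono ?_) (hbound _ (by positivity))
      intro y hy
      simp only [Set.mem_setOf_eq] at *
      rw [hy]; positivity
    have h1 : Tendsto (fun n : ℕ => (1:ℝ)/(n+1)) atTop (𝓝 0) :=
      tendsto_one_div_add_atTop_nhds_zero_nat
    have h2' : Tendsto (fun n : ℕ => ((1:ℝ)/(n+1)) ^ θ) atTop (𝓝 0) := by
      have := (Real.continuousAt_rpow_const 0 θ (Or.inr hθ.le)).tendsto.comp h1
      simpa [Function.comp_def, Real.zero_rpow hθ.ne'] using this
    have h3 : Tendsto (fun n : ℕ => ENNReal.ofReal (C * ((1:ℝ)/(n+1)) ^ θ)) atTop (𝓝 0) := by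
      have h4 := h2'.const_mul C
      rw [mul_zero] at h4
      have := (ENNReal.continuous_ofReal.tendsto 0).comp h4
      simpa only [Function.comp_def, ENNReal.ofReal_zero] using this
    exact le_antisymm (ge_of_tendsto' h3 hle) zero_le
  -- dyadic annuli
  set t : ℕ → ℝ := fun k => R * (2⁻¹ : ℝ) ^ k with ht
  have htpos : ∀ k, 0 < t k := fun k => by rw [ht]; positivity
  set Ak : ℕ → Set Y := fun k => {y | t (k+1) ≤ g y ∧ g y < t k} with hAk
  have hAmeas : ∀ k, MeasurableSet (Ak k) := fun k =>
    (measurableSet_le measurable_const hg).inter (measurableSet_lt hg measurable_const)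
  have hcover : {y | g y < R} ⊆ {y | g y = 0} ∪ ⋃ k, Ak k := by
    intro y hy
    simp only [Set.mem_setOf_eq] at hy
    rcases eq_or_lt_of_le (hg0 y) with h0 | h0
    · exact Or.inl h0.symm
    · right
      have hex : ∃ k, t (k+1) ≤ g y := by
        obtain ⟨n, hn⟩ := exists_pow_lt_of_lt_one (div_pos h0 hR) (by norm_num : (2⁻¹:ℝ) < 1)
        refine ⟨n, ?_⟩
        show R * (2⁻¹:ℝ)^(n+1) ≤ g y
        have h5 : R * (2⁻¹:ℝ)^n < g y := by
          calc R * (2⁻¹:ℝ)^n < R * (g y / R) := mul_lt_mul_of_pos_left hn hR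
            _ = g y := by field_simp
        have h6 : (2⁻¹:ℝ)^(n+1) ≤ (2⁻¹:ℝ)^n :=
          pow_le_pow_of_le_one h2.le (by norm_num) (by omega)
        nlinarith
      refine Set.mem_iUnion.2 ⟨Nat.find hex, Nat.find_spec hex, ?_⟩
      rcases Nat.eq_zero_or_pos (Nat.find hex) with hz | hp
      · rw [hz]
        simpa [ht] using hy
      · obtain ⟨m, hm⟩ : ∃ m, Nat.find hex = m + 1 := ⟨Nat.find hex - 1, by omega⟩
        rw [hm]
        exact lt_of_not_ge (Nat.find_min hex (by omega))
  -- constants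
  set q : ℝ := (2⁻¹:ℝ) ^ (θ - β) with hq
  have hq0 : 0 < q := by rw [hq]; positivity
  have hq1 : q < 1 := Real.rpow_lt_one h2.le (by norm_num) (sub_pos.2 hβθ)
  set K : ℝ := C * R ^ (θ - β) * (2⁻¹:ℝ) ^ (-β) with hK
  have hK0 : 0 < K := by rw [hK]; positivity
  -- termwise bound
  have hterm : ∀ k : ℕ, (∫⁻ y in Ak k, (ENNReal.ofReal (g y)) ^ (-β) ∂ν)
      ≤ ENNReal.ofReal K * (ENNReal.ofReal q) ^ k := by
    intro k
    have hconst : (∫⁻ y in Ak k, (ENNReal.ofReal (g y)) ^ (-β) ∂ν)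
        ≤ (ENNReal.ofReal (t (k+1))) ^ (-β) * ν (Ak k) := by
      rw [← setLIntegral_const (Ak k)]
      refine setLIntegral_mono' (hAmeas k) (fun y hy => ?_)
      exact aux_rpow_neg_le (ENNReal.ofReal_le_ofReal hy.1) hβ.le
    have hmeasb : ν (Ak k) ≤ ENNReal.ofReal (C * (t k) ^ θ) := by
      refine le_trans (measure_mono (fun y hy => hy.2)) (hbound _ (htpos k))
    have hident : (t (k+1)) ^ (-β) * (C * (t k) ^ θ) = K * q ^ k := by
      have hA : (t (k+1)) ^ (-β) = R^(-β) * (((2⁻¹:ℝ)^k)^(-β) * (2⁻¹:ℝ)^(-β)) := by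
        show (R * (2⁻¹:ℝ)^(k+1)) ^ (-β) = _
        rw [pow_succ, ← mul_assoc, Real.mul_rpow (by positivity) h2.le,
          Real.mul_rpow hR.le (by positivity), mul_assoc]
      have hB : (t k) ^ θ = R^θ * ((2⁻¹:ℝ)^k)^θ := by
        show (R * (2⁻¹:ℝ)^k) ^ θ = _
        exact Real.mul_rpow hR.le (by positivity)
      have hR1 : R^(-β) * R^θ = R^(θ-β) := by
        rw [← Real.rpow_add hR]; ring_nf
      have hk1 : ((2⁻¹:ℝ)^k)^(-β) * ((2⁻¹:ℝ)^k)^θ = ((2⁻¹:ℝ)^k)^(θ-β) := by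
        rw [← Real.rpow_add (by positivity)]; ring_nf
      have hk2 : ((2⁻¹:ℝ)^k)^(θ-β) = q^k := by
        rw [← Real.rpow_natCast (2⁻¹:ℝ) k, ← Real.rpow_mul h2.le, mul_comm,
          Real.rpow_mul h2.le, Real.rpow_natCast]
      rw [hA, hB, hK, ← hk2, ← hk1, ← hR1]
      ring
    calc (∫⁻ y in Ak k, (ENNReal.ofReal (g y)) ^ (-β) ∂ν)
        ≤ (ENNReal.ofReal (t (k+1))) ^ (-β) * ν (Ak k) := hconst
      _ ≤ (ENNReal.ofReal (t (k+1))) ^ (-β) * ENNReal.ofReal (C * (t k) ^ θ) :=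
          mul_le_mul_right hmeasb _
      _ = ENNReal.ofReal ((t (k+1)) ^ (-β)) * ENNReal.ofReal (C * (t k) ^ θ) := by
          rw [ENNReal.ofReal_rpow_of_pos (htpos _)]
      _ = ENNReal.ofReal ((t (k+1)) ^ (-β) * (C * (t k) ^ θ)) := by
          rw [← ENNReal.ofReal_mul (Real.rpow_nonneg (htpos _).le _)]
      _ = ENNReal.ofReal (K * q ^ k) := by rw [hident]
      _ = ENNReal.ofReal K * (ENNReal.ofReal q) ^ k := by
          rw [ENNReal.ofReal_mul hK0.le, ENNReal.ofReal_pow hq0.le]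
  calc (∫⁻ y in {y | g y < R}, (ENNReal.ofReal (g y)) ^ (-β) ∂ν)
      ≤ ∫⁻ y in {y | g y = 0} ∪ ⋃ k, Ak k, (ENNReal.ofReal (g y)) ^ (-β) ∂ν :=
        lintegral_mono' (Measure.restrict_mono hcover le_rfl) le_rfl
    _ ≤ (∫⁻ y in {y | g y = 0}, (ENNReal.ofReal (g y)) ^ (-β) ∂ν)
        + ∫⁻ y in ⋃ k, Ak k, (ENNReal.ofReal (g y)) ^ (-β) ∂ν := lintegral_union_le _ _ _
    _ = ∫⁻ y in ⋃ k, Ak k, (ENNReal.ofReal (g y)) ^ (-β) ∂ν := by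
        rw [setLIntegral_measure_zero _ _ hnull, zero_add]
    _ ≤ ∑' k, ∫⁻ y in Ak k, (ENNReal.ofReal (g y)) ^ (-β) ∂ν := lintegral_iUnion_le _ _
    _ ≤ ∑' k, ENNReal.ofReal K * (ENNReal.ofReal q) ^ k := ENNReal.tsum_le_tsum hterm
    _ = ENNReal.ofReal K * (1 - ENNReal.ofReal q)⁻¹ := by
        rw [ENNReal.tsum_mul_left, ENNReal.tsum_geometric]
    _ < ⊤ := by
        apply ENNReal.mul_lt_top ENNReal.ofReal_lt_top
        rw [ENNReal.inv_lt_top]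
        exact tsub_pos_iff_lt.2 (ENNReal.ofReal_lt_one.2 hq1)

lemma geninf {Y : Type*} [MeasurableSpace Y] (ν : Measure Y) (g : Y → ℝ)
    (hg : Measurable g)
    {c C θ β : ℝ} (hc : 0 < c) (hC : 0 < C) (hθ : 0 < θ) (hβ : θ ≤ β)
    (hlow : ∀ t : ℝ, 0 < t → ENNReal.ofReal (c * t ^ θ) ≤ ν {y | g y < t})
    (hup : ∀ t : ℝ, 0 < t → ν {y | g y < t} ≤ ENNReal.ofReal (C * t ^ θ)) :
    (∫⁻ y in {y | g y < 1}, (ENNReal.ofReal (g y)) ^ (-β) ∂ν) = ⊤ := by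
  have hβ0 : 0 < β := hθ.trans_le hβ
  -- choose the ratio l
  set l : ℝ := min 2⁻¹ ((c / (2 * C)) ^ θ⁻¹) with hl
  have hl0 : 0 < l := lt_min (by norm_num) (Real.rpow_pos_of_pos (by positivity) _)
  have hl1 : l < 1 := lt_of_le_of_lt (min_le_left _ _) (by norm_num)
  have hlθ : C * l ^ θ ≤ c / 2 := by
    have h1 : l ^ θ ≤ ((c / (2 * C)) ^ θ⁻¹) ^ θ :=
      Real.rpow_le_rpow hl0.le (min_le_right _ _) hθ.le
    rw [Real.rpow_inv_rpow (by positivity) hθ.ne'] at h1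
    calc C * l ^ θ ≤ C * (c / (2 * C)) := by nlinarith
      _ = c / 2 := by field_simp
  set m : ℕ → ℝ := fun j => l ^ j with hm
  have hm0 : ∀ j, 0 < m j := fun j => pow_pos hl0 j
  have hm1 : ∀ j, m j ≤ 1 := fun j => pow_le_one₀ hl0.le hl1.le
  have hmanti : ∀ i j : ℕ, i ≤ j → m j ≤ m i := fun i j hij =>
    pow_le_pow_of_le_one hl0.le hl1.le hij
  -- annuli
  set S : ℕ → Set Y := fun j => {y | g y < m j} \ {y | g y < m (j+1)} with hS
  have hSmeas : ∀ j, MeasurableSet (S j) :=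
    fun j => (measurableSet_lt hg measurable_const).diff (measurableSet_lt hg measurable_const)
  have hdisj : Pairwise (Function.onFun Disjoint S) := by
    have key : ∀ i j : ℕ, i < j → Disjoint (S i) (S j) := by
      intro i j hij
      rw [Set.disjoint_left]
      rintro y ⟨hy1, hy2⟩ ⟨hy3, _⟩
      exact hy2 (lt_of_lt_of_le hy3 (hmanti (i+1) j hij))
    intro i j hij
    rcases hij.lt_or_gt with h | h
    · exact key i j h
    · exact (key j i h).symm
  have hsub : (⋃ j, S j) ⊆ {y | g y < 1} := by
    rintro y hy
    obtain ⟨j, hj1, -⟩ := Set.mem_iUnion.1 hy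
    exact lt_of_lt_of_le hj1 (hm1 j)
  have hfin : ∀ j, ν {y | g y < m (j+1)} ≠ ⊤ :=
    fun j => ((hup _ (hm0 _)).trans_lt ENNReal.ofReal_lt_top).ne
  -- measure of each annulus
  have hSm : ∀ j, ENNReal.ofReal ((c/2) * m j ^ θ) ≤ ν (S j) := by
    intro j
    have hdiff : ν (S j) = ν {y | g y < m j} - ν {y | g y < m (j+1)} := by
      rw [hS]
      refine measure_diff (fun y hy => ?_)
        (measurableSet_lt hg measurable_const).nullMeasurableSet (hfin j)
      exact lt_of_lt_of_le hy (hmanti j (j+1) (Nat.le_succ j))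
    rw [hdiff]
    have hCm : ν {y | g y < m (j+1)} ≤ ENNReal.ofReal ((c/2) * m j ^ θ) := by
      refine (hup _ (hm0 _)).trans (ENNReal.ofReal_le_ofReal ?_)
      have : m (j+1) ^ θ = l ^ θ * m j ^ θ := by
        rw [hm]
        show (l ^ (j+1) : ℝ) ^ θ = _
        rw [pow_succ, mul_comm (l^j) l, Real.mul_rpow hl0.le (by positivity)]
      rw [this]
      calc C * (l ^ θ * m j ^ θ) = (C * l ^ θ) * m j ^ θ := by ring
        _ ≤ (c / 2) * m j ^ θ := by
            have := Real.rpow_nonneg (hm0 j).le θ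
            nlinarith
    calc ENNReal.ofReal ((c/2) * m j ^ θ)
        = ENNReal.ofReal (c * m j ^ θ) - ENNReal.ofReal ((c/2) * m j ^ θ) := by
          rw [← ENNReal.ofReal_sub _ (by positivity)]
          congr 1
          ring
      _ ≤ ν {y | g y < m j} - ν {y | g y < m (j+1)} :=
          tsub_le_tsub (hlow _ (hm0 j)) hCm
  -- each annulus contributes at least c/2
  have hterm : ∀ j, ENNReal.ofReal (c/2) ≤ ∫⁻ y in S j, (ENNReal.ofReal (g y)) ^ (-β) ∂ν := by
    intro j
    have h1 : ENNReal.ofReal (m j) ^ (-β) * ν (S j)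
        ≤ ∫⁻ y in S j, (ENNReal.ofReal (g y)) ^ (-β) ∂ν := by
      rw [← setLIntegral_const (S j)]
      refine setLIntegral_mono' (hSmeas j) (fun y hy => ?_)
      exact aux_rpow_neg_le (ENNReal.ofReal_le_ofReal hy.1.le) hβ0.le
    refine le_trans ?_ h1
    calc ENNReal.ofReal (c/2)
        ≤ ENNReal.ofReal ((m j) ^ (-β) * ((c/2) * m j ^ θ)) := by
          apply ENNReal.ofReal_le_ofReal
          have hpow : (1:ℝ) ≤ (m j) ^ (θ - β) :=
            Real.one_le_rpow_of_pos_of_le_one_of_nonpos (hm0 j) (hm1 j) (by linarith)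
          have : (m j) ^ (-β) * (m j) ^ θ = (m j) ^ (θ - β) := by
            rw [← Real.rpow_add (hm0 j)]; ring_nf
          nlinarith [Real.rpow_nonneg (hm0 j).le (-β), Real.rpow_nonneg (hm0 j).le θ]
      _ = ENNReal.ofReal ((m j) ^ (-β)) * ENNReal.ofReal ((c/2) * m j ^ θ) :=
          ENNReal.ofReal_mul (Real.rpow_nonneg (hm0 j).le _)
      _ = ENNReal.ofReal (m j) ^ (-β) * ENNReal.ofReal ((c/2) * m j ^ θ) := by
          rw [ENNReal.ofReal_rpow_of_pos (hm0 j)]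
      _ ≤ ENNReal.ofReal (m j) ^ (-β) * ν (S j) := mul_le_mul_right (hSm j) _
  -- conclude
  have hsum : (∫⁻ y in ⋃ j, S j, (ENNReal.ofReal (g y)) ^ (-β) ∂ν) = ⊤ := by
    rw [lintegral_iUnion hSmeas hdisj]
    refine top_le_iff.1 ?_
    calc (⊤ : ℝ≥0∞) = ∑' _ : ℕ, ENNReal.ofReal (c/2) :=
          (ENNReal.tsum_const_eq_top_of_ne_zero
            (ne_of_gt (ENNReal.ofReal_pos.2 (by linarith)))).symm
      _ ≤ _ := ENNReal.tsum_le_tsum hterm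
  refine top_le_iff.1 ?_
  rw [← hsum]
  exact lintegral_mono' (Measure.restrict_mono hsub le_rfl) le_rfl

lemma rho_nonneg {X : Type*} (d : X → X → ℝ) (κ : ℝ) (hqm : IsQuasiMetric d κ)
    (x y z : X) : 0 ≤ hyperRho d x y z := by
  have : Nonempty X := ⟨x⟩
  exact le_ciInf fun u => (hqm.1 x u).trans (le_max_left _ _)

lemma rho_le_max {X : Type*} (d : X → X → ℝ) (κ : ℝ) (hqm : IsQuasiMetric d κ)
    (x y z : X) : hyperRho d x y z ≤ max (d x y) (d x z) := by
  have hbdd : BddBelow (Set.range fun u : X => max (d x u) (max (d y u) (d z u))) :=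
    ⟨0, by rintro _ ⟨u, rfl⟩; exact (hqm.1 x u).trans (le_max_left _ _)⟩
  have h := ciInf_le hbdd x
  have hxx : d x x = 0 := (hqm.2.1 x x).2 rfl
  rw [hxx, hqm.2.2.1 y x, hqm.2.2.1 z x] at h
  refine h.trans (le_of_eq ?_)
  exact max_eq_right ((hqm.1 x y).trans (le_max_left _ _))

lemma max_le_rho {X : Type*} (d : X → X → ℝ) (κ : ℝ) (hκ : 1 ≤ κ)
    (hqm : IsQuasiMetric d κ) (x y z : X) :
    max (d x y) (d x z) ≤ 2 * κ * hyperRho d x y z := by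
  have : Nonempty X := ⟨x⟩
  have h2κ : (0:ℝ) < 2 * κ := by linarith
  have key : ∀ u : X, max (d x y) (d x z) / (2 * κ) ≤ max (d x u) (max (d y u) (d z u)) := by
    intro u
    rw [div_le_iff₀ h2κ]
    have h1 : d x u ≤ max (d x u) (max (d y u) (d z u)) := le_max_left _ _
    have h2 : d y u ≤ max (d x u) (max (d y u) (d z u)) :=
      le_trans (le_max_left _ _) (le_max_right _ _)
    have h3 : d z u ≤ max (d x u) (max (d y u) (d z u)) :=
      le_trans (le_max_right _ _) (le_max_right _ _)
    have hxy : d x y ≤ κ * (d x u + d u y) := hqm.2.2.2 x u y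
    have hxz : d x z ≤ κ * (d x u + d u z) := hqm.2.2.2 x u z
    have hs1 : d u y = d y u := hqm.2.2.1 u y
    have hs2 : d u z = d z u := hqm.2.2.1 u z
    have hκ0 : (0:ℝ) < κ := by linarith
    apply max_le
    · nlinarith
    · nlinarith
  have hd2 : max (d x y) (d x z) / (2 * κ) ≤ hyperRho d x y z := le_ciInf key
  rw [div_le_iff₀ h2κ] at hd2
  linarith

end Aux

/-- `∬_{ρ(x,y,z)<1} ρ(x,y,z)^{-α} dμ dμ` is finite if and only if `α < 2η`. -/
theorem statement12 {X : Type*} [MeasurableSpace X]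
    (d : X → X → ℝ) (κ : ℝ) (hκ : 1 ≤ κ) (hqm : IsQuasiMetric d κ)
    (hd_meas : Measurable fun p : X × X => d p.1 p.2)
    (μ : Measure X) (η : ℝ) (hη : 0 < η)
    (a A : ℝ) (ha : 0 < a) (haA : a ≤ A) (hAhl : IsAhlfors d μ η a A)
    (x : X) (α : ℝ) (hα : 0 < α) :
    (∫⁻ p in {p : X × X | hyperRho d x p.1 p.2 < 1},
        (ENNReal.ofReal (hyperRho d x p.1 p.2)) ^ (-α) ∂(μ.prod μ)) < ⊤ ↔
      α < 2 * η := by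
  have hA0 : 0 < A := ha.trans_le haA
  have h2κ : (0:ℝ) < 2 * κ := by linarith
  have hf : Measurable (fun y => d x y) := hd_meas.comp measurable_prodMk_left
  set M : X × X → ℝ := fun p => max (d x p.1) (d x p.2) with hMdef
  have hM : Measurable M := (hf.comp measurable_fst).max (hf.comp measurable_snd)
  have hM0 : ∀ p, 0 ≤ M p := fun p => (hqm.1 x p.1).trans (le_max_left _ _)
  have hρleM : ∀ p : X × X, hyperRho d x p.1 p.2 ≤ M p :=
    fun p => rho_le_max d κ hqm x p.1 p.2
  have hMleρ : ∀ p : X × X, M p ≤ 2 * κ * hyperRho d x p.1 p.2 :=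
    fun p => max_le_rho d κ hκ hqm x p.1 p.2
  -- sublevel sets of M
  have hMset : ∀ t : ℝ, {p : X × X | M p < t} = {y | d x y < t} ×ˢ {y | d x y < t} := by
    intro t
    ext p
    simp [hMdef, Set.mem_prod, max_lt_iff]
  haveI hsf : SigmaFinite μ := by
    refine MeasureTheory.Measure.sigmaFinite_of_countable
      (Set.countable_range fun n : ℕ => {y | d x y < n + 1}) ?_ ?_
    · rintro _ ⟨n, rfl⟩
      exact ((hAhl x (n+1) (by positivity)).2).trans_lt ENNReal.ofReal_lt_top
    · rw [Set.sUnion_range]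
      ext y
      simp only [Set.mem_iUnion, Set.mem_setOf_eq, Set.mem_univ, iff_true]
      obtain ⟨n, hn⟩ := exists_nat_gt (d x y)
      exact ⟨n, by linarith⟩
  have hsq : ∀ (b t : ℝ), 0 < b → 0 < t → ENNReal.ofReal (b * t ^ η) * ENNReal.ofReal (b * t ^ η)
      = ENNReal.ofReal ((b * b) * t ^ (2 * η)) := by
    intro b t hb ht
    rw [← ENNReal.ofReal_mul (by positivity)]
    congr 1
    rw [show (2:ℝ) * η = η + η by ring, Real.rpow_add ht]
    ring
  have hup : ∀ t : ℝ, 0 < t →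
      (μ.prod μ) {p : X × X | M p < t} ≤ ENNReal.ofReal ((A * A) * t ^ (2 * η)) := by
    intro t ht
    rw [hMset t, Measure.prod_prod, ← hsq A t hA0 ht]
    exact mul_le_mul' (hAhl x t ht).2 (hAhl x t ht).2
  have hlow : ∀ t : ℝ, 0 < t →
      ENNReal.ofReal ((a * a) * t ^ (2 * η)) ≤ (μ.prod μ) {p : X × X | M p < t} := by
    intro t ht
    rw [hMset t, Measure.prod_prod, ← hsq a t ha ht]
    exact mul_le_mul' (hAhl x t ht).1 (hAhl x t ht).1
  constructor
  · intro hfin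
    by_contra hcon
    push_neg at hcon
    have htop := geninf (μ.prod μ) M hM (by positivity : (0:ℝ) < a * a)
      (by positivity : (0:ℝ) < A * A) (by linarith : (0:ℝ) < 2 * η) hcon hlow hup
    have hle : (∫⁻ p in {p : X × X | M p < 1}, (ENNReal.ofReal (M p)) ^ (-α) ∂(μ.prod μ))
        ≤ ∫⁻ p in {p : X × X | hyperRho d x p.1 p.2 < 1},
            (ENNReal.ofReal (hyperRho d x p.1 p.2)) ^ (-α) ∂(μ.prod μ) := by
      refine lintegral_mono' (Measure.restrict_mono (fun p hp => ?_) le_rfl) (fun p => ?_)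
      · exact lt_of_le_of_lt (hρleM p) hp
      · exact aux_rpow_neg_le (ENNReal.ofReal_le_ofReal (hρleM p)) hα.le
    rw [htop] at hle
    exact absurd (top_le_iff.1 hle) (by simpa using hfin.ne)
  · intro hαη
    have hfin2 := genfin (μ.prod μ) M hM hM0 (by positivity : (0:ℝ) < A * A) hα hαη h2κ hup
    have hu0 : ENNReal.ofReal (2 * κ) ≠ 0 := (ENNReal.ofReal_pos.2 h2κ).ne'
    have hut : ENNReal.ofReal (2 * κ) ≠ ⊤ := ENNReal.ofReal_ne_top
    have hpt : ∀ p : X × X, (ENNReal.ofReal (hyperRho d x p.1 p.2)) ^ (-α)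
        ≤ (ENNReal.ofReal (2 * κ)) ^ α * (ENNReal.ofReal (M p)) ^ (-α) := by
      intro p
      have h1 : ENNReal.ofReal (M p) ≤
          ENNReal.ofReal (2 * κ) * ENNReal.ofReal (hyperRho d x p.1 p.2) := by
        rw [← ENNReal.ofReal_mul h2κ.le]
        exact ENNReal.ofReal_le_ofReal (hMleρ p)
      have h2 : (ENNReal.ofReal (2 * κ) * ENNReal.ofReal (hyperRho d x p.1 p.2)) ^ (-α)
          ≤ (ENNReal.ofReal (M p)) ^ (-α) := aux_rpow_neg_le h1 hα.le
      rw [ENNReal.mul_rpow_of_ne_top hut ENNReal.ofReal_ne_top] at h2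
      calc (ENNReal.ofReal (hyperRho d x p.1 p.2)) ^ (-α)
          = (ENNReal.ofReal (2 * κ)) ^ α * ((ENNReal.ofReal (2 * κ)) ^ (-α)
              * (ENNReal.ofReal (hyperRho d x p.1 p.2)) ^ (-α)) := by
            rw [← mul_assoc, ← ENNReal.rpow_add _ _ hu0 hut, add_neg_cancel,
              ENNReal.rpow_zero, one_mul]
        _ ≤ (ENNReal.ofReal (2 * κ)) ^ α * (ENNReal.ofReal (M p)) ^ (-α) :=
            mul_le_mul_right h2 _
    have hsub : {p : X × X | hyperRho d x p.1 p.2 < 1} ⊆ {p : X × X | M p < 2 * κ} := by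
      intro p hp
      have := hMleρ p
      have hρ1 : hyperRho d x p.1 p.2 < 1 := hp
      simp only [Set.mem_setOf_eq]
      nlinarith
    calc (∫⁻ p in {p : X × X | hyperRho d x p.1 p.2 < 1},
            (ENNReal.ofReal (hyperRho d x p.1 p.2)) ^ (-α) ∂(μ.prod μ))
        ≤ ∫⁻ p in {p : X × X | M p < 2 * κ},
            (ENNReal.ofReal (2 * κ)) ^ α * (ENNReal.ofReal (M p)) ^ (-α) ∂(μ.prod μ) :=
          lintegral_mono' (Measure.restrict_mono hsub le_rfl) hpt
      _ = (ENNReal.ofReal (2 * κ)) ^ α * ∫⁻ p in {p : X × X | M p < 2 * κ},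
            (ENNReal.ofReal (M p)) ^ (-α) ∂(μ.prod μ) :=
          lintegral_const_mul _ ((ENNReal.measurable_ofReal.comp hM).pow_const _)
      _ < ⊤ := ENNReal.mul_lt_top
          (ENNReal.rpow_lt_top_of_nonneg hα.le ENNReal.ofReal_ne_top) hfin2
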